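/- Let Q(t) = ∫_t^∞ (1/√(2π))·e^{−x²/2} dx be the standard Gaussian tail probability. Then for every t > 0 and every r > 0: (tr/(1+(tr)²)) · t^{r²} · (√(2π))^{r²−1} ≤ Q(tr)/Q(t)^{r²} ≤ (√(2π)·(1+t²)/t)^{r²−1} · (t²+1)/(r·t²). -/

import Mathlib

/-!
STATEMENT 19: For the standard Gaussian tail `Q(t) = ∫_t^∞ (1/√(2π)) e^{−x²/2} dx`,
for all `t > 0` and `r > 0`:
`(tr/(1+(tr)²)) · t^{r²} · (√(2π))^{r²−1} ≤ Q(tr)/Q(t)^{r²}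
  ≤ (√(2π)·(1+t²)/t)^{r²−1} · (t²+1)/(r·t²)`.
(Powers with real exponents are `Real.rpow`.)
-/

open scoped Real

noncomputable def gaussQ (t : ℝ) : ℝ :=
  ∫ x in Set.Ioi t, Real.exp (-x ^ 2 / 2) / Real.sqrt (2 * Real.pi)


open MeasureTheory Set Filter Real

-- basic facts
lemma expInt : MeasureTheory.Integrable (fun x : ℝ => Real.exp (-x ^ 2 / 2)) := by
  have h := integrable_exp_neg_mul_sq (by norm_num : (0:ℝ) < 1/2)
  refine h.congr ?_
  filter_upwards with x
  ring_nf

lemma gaussBump_tendsto : Tendsto (fun x : ℝ => Real.exp (-x ^ 2 / 2)) atTop (nhds 0) := by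
  apply Real.tendsto_exp_atBot.comp
  have : Tendsto (fun x : ℝ => x ^ 2 / 2) atTop atTop :=
    (tendsto_pow_atTop (by norm_num)).atTop_div_const (by norm_num)
  simpa [neg_div, Function.comp_def] using tendsto_neg_atTop_atBot.comp this

lemma hasDerivAt_gaussBump (x : ℝ) :
    HasDerivAt (fun y : ℝ => Real.exp (-y ^ 2 / 2)) (-x * Real.exp (-x ^ 2 / 2)) x := by
  have h : HasDerivAt (fun y : ℝ => -y ^ 2 / 2) (-x) x := by
    have := ((hasDerivAt_pow 2 x).neg.div_const 2)
    refine this.congr_deriv ?_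
    simp; ring
  simpa [mul_comm] using h.exp

lemma E_upper {s : ℝ} (hs : 0 < s) :
    ∫ x in Ioi s, Real.exp (-x ^ 2 / 2) ≤ Real.exp (-s ^ 2 / 2) / s := by
  have hderiv : ∀ x ∈ Ici s, HasDerivAt (fun y : ℝ => -Real.exp (-y ^ 2 / 2))
      (x * Real.exp (-x ^ 2 / 2)) x := by
    intro x _
    exact (hasDerivAt_gaussBump x).neg.congr_deriv (by ring)
  have hpos : ∀ x ∈ Ioi s, 0 ≤ x * Real.exp (-x ^ 2 / 2) := fun x hx =>
    mul_nonneg (hs.trans hx).le (Real.exp_pos _).le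
  have htend : Tendsto (fun y : ℝ => -Real.exp (-y ^ 2 / 2)) atTop (nhds 0) := by
    simpa using gaussBump_tendsto.neg
  have hint : IntegrableOn (fun x : ℝ => x * Real.exp (-x ^ 2 / 2)) (Ioi s) :=
    integrableOn_Ioi_deriv_of_nonneg' hderiv hpos htend
  have hval : ∫ x in Ioi s, x * Real.exp (-x ^ 2 / 2) = Real.exp (-s ^ 2 / 2) := by
    have := integral_Ioi_of_hasDerivAt_of_nonneg' hderiv hpos htend
    simpa using this
  have hmono : ∫ x in Ioi s, Real.exp (-x ^ 2 / 2)
      ≤ ∫ x in Ioi s, (1 / s) * (x * Real.exp (-x ^ 2 / 2)) := by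
    refine setIntegral_mono_on expInt.integrableOn (hint.const_mul _) measurableSet_Ioi ?_
    intro x hx
    have hx' : s < x := hx
    rw [one_div, ← mul_assoc, inv_mul_eq_div]
    nth_rewrite 1 [← one_mul (Real.exp (-x ^ 2 / 2))]
    gcongr
    rw [le_div_iff₀ hs]
    simpa using hx'.le
  calc ∫ x in Ioi s, Real.exp (-x ^ 2 / 2)
      ≤ ∫ x in Ioi s, (1 / s) * (x * Real.exp (-x ^ 2 / 2)) := hmono
    _ = (1 / s) * ∫ x in Ioi s, x * Real.exp (-x ^ 2 / 2) := by
        rw [MeasureTheory.integral_const_mul]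
    _ = Real.exp (-s ^ 2 / 2) / s := by rw [hval]; ring

lemma hasDerivAt_mills (x : ℝ) :
    HasDerivAt (fun y : ℝ => y / (1 + y ^ 2) * Real.exp (-y ^ 2 / 2))
      (((1 - x ^ 2) / (1 + x ^ 2) ^ 2 - x ^ 2 / (1 + x ^ 2)) * Real.exp (-x ^ 2 / 2)) x := by
  have hden : (1 + x ^ 2) ≠ 0 := by positivity
  have h1 : HasDerivAt (fun y : ℝ => y / (1 + y ^ 2)) ((1 - x ^ 2) / (1 + x ^ 2) ^ 2) x := by
    have hd : HasDerivAt (fun y : ℝ => 1 + y ^ 2) (2 * x) x := by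
      simpa using (hasDerivAt_pow 2 x).const_add 1
    have := (hasDerivAt_id x).div hd hden
    refine this.congr_deriv ?_
    rw [id_eq]
    field_simp
    ring
  have := h1.mul (hasDerivAt_gaussBump x)
  refine this.congr_deriv ?_
  ring

lemma E_lower {s : ℝ} (hs : 0 < s) :
    s / (1 + s ^ 2) * Real.exp (-s ^ 2 / 2) ≤ ∫ x in Ioi s, Real.exp (-x ^ 2 / 2) := by
  set F' : ℝ → ℝ := fun x =>
    -(((1 - x ^ 2) / (1 + x ^ 2) ^ 2 - x ^ 2 / (1 + x ^ 2)) * Real.exp (-x ^ 2 / 2)) with hF'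
  have hcontF' : Continuous F' := by
    apply Continuous.neg
    apply Continuous.mul
    · apply Continuous.sub
      · exact (continuous_const.sub (continuous_pow 2)).div
          ((continuous_const.add (continuous_pow 2)).pow 2) (fun x => by positivity)
      · exact (continuous_pow 2).div (continuous_const.add (continuous_pow 2))
          (fun x => by positivity)
    · exact Real.continuous_exp.comp (by continuity)
  have hbound : ∀ x : ℝ, ‖F' x‖ ≤ ‖2 * Real.exp (-x ^ 2 / 2)‖ := by
    intro x
    have he : (0:ℝ) < Real.exp (-x ^ 2 / 2) := Real.exp_pos _
    have hd1 : (0:ℝ) < 1 + x ^ 2 := by positivity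
    have hd2 : (0:ℝ) < (1 + x ^ 2) ^ 2 := by positivity
    have h1 : |(1 - x ^ 2) / (1 + x ^ 2) ^ 2| ≤ 1 := by
      rw [abs_div, abs_of_pos hd2, div_le_one hd2]
      rw [abs_le]
      constructor <;> nlinarith
    have h2 : |x ^ 2 / (1 + x ^ 2)| ≤ 1 := by
      rw [abs_div, abs_of_pos hd1, div_le_one hd1]
      rw [abs_le]
      constructor <;> nlinarith
    have h3 : |(1 - x ^ 2) / (1 + x ^ 2) ^ 2 - x ^ 2 / (1 + x ^ 2)| ≤ 2 := by
      calc |(1 - x ^ 2) / (1 + x ^ 2) ^ 2 - x ^ 2 / (1 + x ^ 2)|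
          ≤ |(1 - x ^ 2) / (1 + x ^ 2) ^ 2| + |x ^ 2 / (1 + x ^ 2)| := abs_sub _ _
        _ ≤ 2 := by linarith
    rw [Real.norm_eq_abs, Real.norm_eq_abs, hF']
    rw [abs_neg, abs_mul, abs_mul, abs_of_pos he, abs_of_pos (by norm_num : (0:ℝ) < 2)]
    exact mul_le_mul_of_nonneg_right h3 he.le
  have hintF' : IntegrableOn F' (Ioi s) :=
    ((expInt.const_mul 2).mono hcontF'.aestronglyMeasurable
      (Filter.Eventually.of_forall hbound)).integrableOn
  have htend : Tendsto (fun y : ℝ => -(y / (1 + y ^ 2) * Real.exp (-y ^ 2 / 2)))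
      atTop (nhds 0) := by
    have h0 : Tendsto (fun y : ℝ => y / (1 + y ^ 2) * Real.exp (-y ^ 2 / 2)) atTop (nhds 0) := by
      apply tendsto_of_tendsto_of_tendsto_of_le_of_le' tendsto_const_nhds gaussBump_tendsto
      · filter_upwards [Filter.eventually_ge_atTop (0:ℝ)] with y hy
        have : (0:ℝ) < 1 + y ^ 2 := by positivity
        positivity
      · filter_upwards [Filter.eventually_ge_atTop (0:ℝ)] with y hy
        have hd1 : (0:ℝ) < 1 + y ^ 2 := by positivity
        nth_rewrite 2 [← one_mul (Real.exp (-y ^ 2 / 2))]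
        gcongr
        rw [div_le_one hd1]
        nlinarith
    simpa using h0.neg
  have hderiv : ∀ x ∈ Ici s, HasDerivAt
      (fun y : ℝ => -(y / (1 + y ^ 2) * Real.exp (-y ^ 2 / 2))) (F' x) x :=
    fun x _ => (hasDerivAt_mills x).neg
  have hval : ∫ x in Ioi s, F' x = s / (1 + s ^ 2) * Real.exp (-s ^ 2 / 2) := by
    have := integral_Ioi_of_hasDerivAt_of_tendsto' hderiv hintF' htend
    simpa using this
  have hmono : ∫ x in Ioi s, F' x ≤ ∫ x in Ioi s, Real.exp (-x ^ 2 / 2) := by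
    refine setIntegral_mono_on hintF' expInt.integrableOn measurableSet_Ioi ?_
    intro x _
    have he : (0:ℝ) < Real.exp (-x ^ 2 / 2) := Real.exp_pos _
    have hd1 : (0:ℝ) < 1 + x ^ 2 := by positivity
    have hd2 : (0:ℝ) < (1 + x ^ 2) ^ 2 := by positivity
    have hc : -((1 - x ^ 2) / (1 + x ^ 2) ^ 2 - x ^ 2 / (1 + x ^ 2)) ≤ 1 := by
      rw [neg_sub, div_sub_div _ _ hd1.ne' hd2.ne', div_le_one (by positivity)]
      nlinarith
    calc F' x = -((1 - x ^ 2) / (1 + x ^ 2) ^ 2 - x ^ 2 / (1 + x ^ 2)) * Real.exp (-x ^ 2 / 2) := by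
          rw [hF']; ring
      _ ≤ 1 * Real.exp (-x ^ 2 / 2) := mul_le_mul_of_nonneg_right hc he.le
      _ = Real.exp (-x ^ 2 / 2) := one_mul _
  linarith [hval ▸ hmono]

lemma gaussQ_eq (s : ℝ) :
    gaussQ s = (∫ x in Ioi s, Real.exp (-x ^ 2 / 2)) / Real.sqrt (2 * Real.pi) := by
  unfold gaussQ
  rw [MeasureTheory.integral_div]

lemma gaussQ_upper {s : ℝ} (hs : 0 < s) :
    gaussQ s ≤ Real.exp (-s ^ 2 / 2) / (s * Real.sqrt (2 * Real.pi)) := by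
  have hc : (0:ℝ) < Real.sqrt (2 * Real.pi) := Real.sqrt_pos.2 (by positivity)
  rw [gaussQ_eq, ← div_div]
  exact (div_le_div_iff_of_pos_right hc).mpr (E_upper hs)

lemma gaussQ_lower {s : ℝ} (hs : 0 < s) :
    s / (1 + s ^ 2) * Real.exp (-s ^ 2 / 2) / Real.sqrt (2 * Real.pi) ≤ gaussQ s := by
  have hc : (0:ℝ) < Real.sqrt (2 * Real.pi) := Real.sqrt_pos.2 (by positivity)
  rw [gaussQ_eq]
  exact (div_le_div_iff_of_pos_right hc).mpr (E_lower hs)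

lemma gaussQ_pos {s : ℝ} (hs : 0 < s) : 0 < gaussQ s := by
  have hc : (0:ℝ) < Real.sqrt (2 * Real.pi) := Real.sqrt_pos.2 (by positivity)
  refine lt_of_lt_of_le ?_ (gaussQ_lower hs)
  have h1 : (0:ℝ) < 1 + s ^ 2 := by positivity
  positivity

theorem gaussian_tail_power_ratio_bounds (t r : ℝ) (ht : 0 < t) (hr : 0 < r) :
    t * r / (1 + (t * r) ^ 2) * t ^ (r ^ 2 : ℝ) * Real.sqrt (2 * Real.pi) ^ (r ^ 2 - 1 : ℝ)
        ≤ gaussQ (t * r) / gaussQ t ^ (r ^ 2 : ℝ) ∧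
      gaussQ (t * r) / gaussQ t ^ (r ^ 2 : ℝ)
        ≤ (Real.sqrt (2 * Real.pi) * (1 + t ^ 2) / t) ^ (r ^ 2 - 1 : ℝ)
            * ((t ^ 2 + 1) / (r * t ^ 2)) := by
  have hc : (0:ℝ) < Real.sqrt (2 * Real.pi) := Real.sqrt_pos.2 (by positivity)
  have hr2 : (0:ℝ) < (r ^ 2 : ℝ) := by positivity
  have htr : 0 < t * r := mul_pos ht hr
  have hexp : Real.exp (-(t * r) ^ 2 / 2) = Real.exp (-t ^ 2 / 2) ^ (r ^ 2 : ℝ) := by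
    rw [← Real.exp_mul]; congr 1; ring
  have hQtpos := gaussQ_pos ht
  have hQtrpos := gaussQ_pos htr
  have h1t : (0:ℝ) < 1 + t ^ 2 := by positivity
  have h1tr : (0:ℝ) < 1 + (t * r) ^ 2 := by positivity
  have hU2 : gaussQ t ^ (r ^ 2 : ℝ)
      ≤ (Real.exp (-t ^ 2 / 2) / (t * Real.sqrt (2 * Real.pi))) ^ (r ^ 2 : ℝ) :=
    Real.rpow_le_rpow hQtpos.le (gaussQ_upper ht) hr2.le
  have hL2 : (t / (1 + t ^ 2) * Real.exp (-t ^ 2 / 2) / Real.sqrt (2 * Real.pi)) ^ (r ^ 2 : ℝ)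
      ≤ gaussQ t ^ (r ^ 2 : ℝ) :=
    Real.rpow_le_rpow (by positivity) (gaussQ_lower ht) hr2.le
  have hQt2pos : 0 < gaussQ t ^ (r ^ 2 : ℝ) := Real.rpow_pos_of_pos hQtpos _
  have hE2 : (0:ℝ) < Real.exp (-t ^ 2 / 2) ^ (r ^ 2 : ℝ) :=
    Real.rpow_pos_of_pos (Real.exp_pos _) _
  have ht2 : (0:ℝ) < t ^ (r ^ 2 : ℝ) := Real.rpow_pos_of_pos ht _
  have hc2 : (0:ℝ) < Real.sqrt (2 * Real.pi) ^ (r ^ 2 : ℝ) := Real.rpow_pos_of_pos hc _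
  constructor
  · have hchain : (t * r / (1 + (t * r) ^ 2) * Real.exp (-(t * r) ^ 2 / 2)
          / Real.sqrt (2 * Real.pi))
        / ((Real.exp (-t ^ 2 / 2) / (t * Real.sqrt (2 * Real.pi))) ^ (r ^ 2 : ℝ))
        ≤ gaussQ (t * r) / gaussQ t ^ (r ^ 2 : ℝ) :=
      div_le_div₀ hQtrpos.le (gaussQ_lower htr) hQt2pos hU2
    refine le_trans (le_of_eq ?_) hchain
    rw [Real.div_rpow (Real.exp_pos _).le (by positivity),
        Real.mul_rpow ht.le hc.le, hexp, Real.rpow_sub hc, Real.rpow_one]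
    field_simp
  · have hchain : gaussQ (t * r) / gaussQ t ^ (r ^ 2 : ℝ)
        ≤ (Real.exp (-(t * r) ^ 2 / 2) / (t * r * Real.sqrt (2 * Real.pi)))
          / ((t / (1 + t ^ 2) * Real.exp (-t ^ 2 / 2) / Real.sqrt (2 * Real.pi)) ^ (r ^ 2 : ℝ)) :=
      div_le_div₀ (by positivity) (gaussQ_upper htr)
        (Real.rpow_pos_of_pos (by positivity) _) hL2
    refine hchain.trans (le_of_eq ?_)
    have hb : (0:ℝ) < Real.sqrt (2 * Real.pi) * (1 + t ^ 2) / t := by positivity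
    have h1t2 : (0:ℝ) < (1 + t ^ 2) ^ (r ^ 2 : ℝ) := Real.rpow_pos_of_pos h1t _
    rw [Real.div_rpow (by positivity) hc.le,
        Real.mul_rpow (by positivity) (Real.exp_pos _).le,
        Real.div_rpow ht.le h1t.le, hexp,
        Real.rpow_sub hb, Real.rpow_one,
        Real.div_rpow (by positivity) ht.le,
        Real.mul_rpow hc.le h1t.le]
    field_simp
    ring
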